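/- arXiv:1811.04243 — 4 statements merged into one kernel-verified Lean document; each statement's English description precedes it below -/
import Mathlib

section
/- Let F be a field, n ≥ 1, and A ⊆ M_n(F) an irreducible F-subalgebra containing the identity. If r is the minimal nonzero rank of elements of A, then r divides n and A is isomorphic as an F-algebra to M_{n/r}(Δ) for some division F-algebra Δ of dimension r over F. -/
set_option synthInstance.maxHeartbeats 1000000
set_option maxHeartbeats 1000000

open LinearMap Module

section Density

variable {R : Type*} [Ring R] {V : Type*} [AddCommGroup V] [Module R V]
  [IsSimpleModule R V]

/-- Jacobson density, finite version: an `End R V`-linear endomorphism of a simple module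
agrees with the action of some ring element on any finite family of vectors. -/
theorem jacobson_density_fin (g : Module.End (Module.End R V) V) (k : ℕ) (v : Fin k → V) :
    ∃ ρ : R, ∀ i, ρ • v i = g (v i) := by
  classical
  haveI : IsSemisimpleModule R (Fin k → V) := by
    refine isSemisimpleModule_of_isSemisimpleModule_submodule'
      (p := fun i => LinearMap.range (LinearMap.single R (fun _ : Fin k => V) i)) ?_ ?_
    · intro i
      have e : V ≃ₗ[R] LinearMap.range (LinearMap.single R (fun _ : Fin k => V) i) :=
        LinearEquiv.ofInjective _ (LinearMap.ker_eq_bot.mp (LinearMap.ker_single R (fun _ : Fin k => V) i))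
      haveI : IsSimpleModule R (LinearMap.range (LinearMap.single R (fun _ : Fin k => V) i)) :=
        IsSimpleModule.congr e.symm
      infer_instance
    · exact LinearMap.iSup_range_single R _
  set U : Submodule R (Fin k → V) :=
    LinearMap.range (LinearMap.toSpanSingleton R (Fin k → V) v) with hU
  obtain ⟨U', hU'⟩ := exists_isCompl U
  set π : (Fin k → V) →ₗ[R] (Fin k → V) :=
    U.subtype ∘ₗ Submodule.linearProjOfIsCompl U U' hU' with hπ
  -- the key commutation: π commutes with the diagonal action of g
  have hcomm : ∀ x : Fin k → V, π (fun i => g (x i)) = fun i => g (π x i) := by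
    intro x
    have hx : x = ∑ i, LinearMap.single R (fun _ : Fin k => V) i (x i) := by
      funext j
      simp [Finset.sum_apply, Pi.single_apply, Finset.sum_ite_eq' (Finset.univ) j]
    rw [hx]
    have hgsum : (fun i => g ((∑ j, LinearMap.single R (fun _ : Fin k => V) j (x j)) i))
        = ∑ j, (fun i => g ((LinearMap.single R (fun _ : Fin k => V) j (x j)) i)) := by
      funext i
      simp only [Finset.sum_apply]
      rw [map_sum]
    rw [hgsum, map_sum]
    have hsingle : ∀ (j : Fin k) (w : V),
        π (fun i => g ((LinearMap.single R (fun _ : Fin k => V) j w) i))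
          = fun i => g ((π (LinearMap.single R (fun _ : Fin k => V) j w)) i) := by
      intro j w
      have h1 : (fun i => g ((LinearMap.single R (fun _ : Fin k => V) j w) i))
          = LinearMap.single R (fun _ : Fin k => V) j (g w) := by
        funext i
        by_cases hij : j = i
        · subst hij; simp [Pi.single_apply]
        · simp [Pi.single_apply, hij]
      rw [h1]
      funext i
      -- e := proj i ∘ π ∘ single j  is an element of End R V, so commutes with g
      set e : Module.End R V :=
        (LinearMap.proj i) ∘ₗ π ∘ₗ (LinearMap.single R (fun _ : Fin k => V) j) with he
      have hge : g (e • w) = e • g w := g.map_smul e w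
      have h2 : e • g w = π (LinearMap.single R (fun _ : Fin k => V) j (g w)) i := rfl
      have h3 : e • w = π (LinearMap.single R (fun _ : Fin k => V) j w) i := rfl
      rw [← h2, ← hge]
      exact congrArg g h3.symm
    rw [map_sum]
    rw [Finset.sum_congr rfl fun j _ => hsingle j (x j)]
    funext i
    simp only [map_sum, Finset.sum_apply]
  -- v itself is in U and π fixes U
  have hvU : v ∈ U := ⟨1, by simp⟩
  have hπv : π v = v := by
    simp only [hπ, LinearMap.comp_apply]
    rw [show U.linearProjOfIsCompl U' hU' v = ⟨v, hvU⟩ from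
      Submodule.linearProjOfIsCompl_apply_left hU' ⟨v, hvU⟩]
    rfl
  have hgv : (fun i => g (v i)) ∈ U := by
    have h := hcomm v
    rw [hπv] at h
    rw [← h]
    simp only [hπ, LinearMap.comp_apply]
    exact (Submodule.linearProjOfIsCompl U U' hU' _).2
  obtain ⟨ρ, hρ⟩ := hgv
  exact ⟨ρ, fun i => congrFun hρ i⟩

end Density

section DensityFull

theorem jacobson_density_surj (F : Type*) [Field F] {R : Type*} [Ring R] [Algebra F R]
    {V : Type*} [AddCommGroup V] [Module F V] [Module R V]
    [IsScalarTower F R V] [SMulCommClass R F V] [IsSimpleModule R V] [FiniteDimensional F V]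
    (g : Module.End (Module.End R V) V) :
    ∃ ρ : R, ∀ x : V, ρ • x = g x := by
  let b := Module.finBasis F V
  obtain ⟨ρ, hρ⟩ := jacobson_density_fin g (Module.finrank F V) b
  refine ⟨ρ, fun x => ?_⟩
  have hg : ∀ (c : F) (y : V), g (c • y) = c • g y := by
    intro c y
    have h1 : (c • (LinearMap.id : Module.End R V)) • y = c • y := by
      simp [LinearMap.smul_apply]
    have h2 : (c • (LinearMap.id : Module.End R V)) • g y = c • g y := by
      simp [LinearMap.smul_apply]
    rw [← h1, g.map_smul, h2]
  let L1 : V →ₗ[F] V :=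
    { toFun := fun x => ρ • x
      map_add' := fun x y => smul_add ρ x y
      map_smul' := fun c x => smul_comm ρ c x }
  let L2 : V →ₗ[F] V :=
    { toFun := g
      map_add' := g.map_add
      map_smul' := hg }
  have : L1 = L2 := b.ext fun i => hρ i
  exact congrFun (congrArg (fun (f : V →ₗ[F] V) => (f : V → V)) this) x

end DensityFull

section EndMatrix

open MulOpposite

variable {D : Type*} [Ring D] {V : Type*} [AddCommGroup V] [Module D V]
  {m : ℕ}

/-- The endomorphism ring of a module with a finite basis over a ring `D` is
isomorphic to matrices over `Dᵐᵒᵖ`. -/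
noncomputable def endRingEquivMatrix (b : Basis (Fin m) D V) :
    Module.End D V ≃+* Matrix (Fin m) (Fin m) Dᵐᵒᵖ where
  toFun f := Matrix.of fun i j => op (b.repr (f (b j)) i)
  invFun M := b.constr ℕ fun j => ∑ i, (M i j).unop • b i
  left_inv f := by
    refine b.ext fun j => ?_
    rw [Basis.constr_basis]
    simp only [Matrix.of_apply, unop_op]
    exact b.sum_repr (f (b j))
  right_inv M := by
    ext i j
    simp only [Matrix.of_apply, Basis.constr_basis]
    rw [map_sum]
    simp only [map_smul, Basis.repr_self, Finsupp.coe_finset_sum, Finset.sum_apply,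
      Finsupp.smul_apply, Finsupp.single_apply, smul_eq_mul, mul_ite, mul_one, mul_zero]
    rw [Finset.sum_ite_eq' Finset.univ i (fun k => (M k j).unop)]
    simp
  map_add' f g := by
    ext i j
    simp [Matrix.add_apply]
  map_mul' f g := by
    ext i j
    simp only [Matrix.of_apply, Module.End.mul_apply, Matrix.mul_apply]
    have hg : g (b j) = ∑ k, b.repr (g (b j)) k • b k := (b.sum_repr (g (b j))).symm
    conv_lhs => rw [hg]
    rw [map_sum, map_sum]
    simp only [map_smul, Finsupp.coe_finset_sum, Finset.sum_apply, Finsupp.smul_apply,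
      smul_eq_mul]
    rw [show (op (∑ x : Fin m, (b.repr (g (b j))) x * (b.repr (f (b x))) i) : Dᵐᵒᵖ)
        = ∑ x : Fin m, op ((b.repr (g (b j))) x * (b.repr (f (b x))) i) from
      map_sum (opAddEquiv : D ≃+ Dᵐᵒᵖ) _ _]
    exact Finset.sum_congr rfl fun k _ => by rw [op_mul]

end EndMatrix

section Main

variable {F : Type} [Field F] {n : ℕ} (A : Subalgebra F (Matrix (Fin n) (Fin n) F))

local instance matActSMul : SMul ↥A (Fin n → F) :=
  ⟨fun a v => (a : Matrix (Fin n) (Fin n) F).mulVec v⟩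

lemma matAct_smul_def (a : ↥A) (v : Fin n → F) :
    a • v = (a : Matrix (Fin n) (Fin n) F).mulVec v := rfl

local instance matActMulAction : MulAction ↥A (Fin n → F) where
  one_smul v := by simp [matAct_smul_def]
  mul_smul a b v := by simp [matAct_smul_def, Matrix.mulVec_mulVec]

local instance matActDistribMulAction : DistribMulAction ↥A (Fin n → F) where
  smul_add a v w := by simp [matAct_smul_def, Matrix.mulVec_add]
  smul_zero a := by simp [matAct_smul_def]

local instance matActModule : Module ↥A (Fin n → F) where
  add_smul a b v := by simp [matAct_smul_def, Matrix.add_mulVec]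
  zero_smul v := by simp [matAct_smul_def]

local instance matActTower : IsScalarTower F ↥A (Fin n → F) :=
  ⟨fun c a v => by
    simp only [matAct_smul_def]
    rw [show ((c • a : ↥A) : Matrix (Fin n) (Fin n) F) = c • (a : Matrix (Fin n) (Fin n) F)
      from rfl, Matrix.smul_mulVec]⟩

local instance matActComm : SMulCommClass ↥A F (Fin n → F) :=
  ⟨fun a c v => by
    simp only [matAct_smul_def]
    rw [Matrix.mulVec_smul]⟩

lemma matAct_isSimple (hn : 1 ≤ n)
    (hirr : ∀ W : Submodule F (Fin n → F),
      (∀ M ∈ A, ∀ v ∈ W, M.mulVec v ∈ W) → W = ⊥ ∨ W = ⊤) :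
    IsSimpleModule ↥A (Fin n → F) := by
  haveI : Nonempty (Fin n) := ⟨⟨0, hn⟩⟩
  haveI : Nontrivial (Fin n → F) := inferInstance
  refine { eq_bot_or_eq_top := ?_ }
  intro W
  have hinv : ∀ M ∈ A, ∀ v ∈ W.restrictScalars F, M.mulVec v ∈ W.restrictScalars F := by
    intro M hM v hv
    have := W.smul_mem (⟨M, hM⟩ : ↥A) hv
    rwa [matAct_smul_def] at this
  rcases hirr _ hinv with h | h
  · left
    rw [eq_bot_iff]
    intro x hx
    have hx' : x ∈ W.restrictScalars F := hx
    rw [h] at hx'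
    exact hx'
  · right
    rw [eq_top_iff]
    intro x _
    have hx' : x ∈ W.restrictScalars F := by rw [h]; trivial
    exact hx'

local instance endTower :
    IsScalarTower F (Module.End ↥A (Fin n → F)) (Fin n → F) :=
  ⟨fun c d v => by
    show (c • d) v = c • d v
    rw [LinearMap.smul_apply]⟩

local instance endComm :
    SMulCommClass (Module.End ↥A (Fin n → F)) F (Fin n → F) :=
  ⟨fun d c v => by
    show d (c • v) = c • d v
    rw [← algebraMap_smul ↥A c v, d.map_smul, algebraMap_smul]⟩

/-- The canonical algebra map from `A` to the `D`-linear endomorphisms,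
where `D` is the commutant. -/
noncomputable def Phi :
    ↥A →ₐ[F] Module.End (Module.End ↥A (Fin n → F)) (Fin n → F) where
  toFun a :=
    { toFun := fun v => a • v
      map_add' := fun v w => smul_add a v w
      map_smul' := fun d v => (d.map_smul a v).symm }
  map_one' := LinearMap.ext fun v => one_smul _ v
  map_mul' a b := LinearMap.ext fun v => mul_smul a b v
  map_zero' := LinearMap.ext fun v => zero_smul _ v
  map_add' a b := LinearMap.ext fun v => add_smul a b v
  commutes' c := LinearMap.ext fun v => by
    show (algebraMap F ↥A c) • v = (algebraMap F (Module.End (Module.End ↥A (Fin n → F)) (Fin n → F)) c) v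
    rw [algebraMap_smul, Module.algebraMap_end_apply]

lemma Phi_injective : Function.Injective (Phi A) := by
  intro a a' h
  have hv : ∀ v, a • v = a' • v := fun v => LinearMap.congr_fun h v
  apply Subtype.ext
  apply Matrix.ext
  intro i j
  have := hv (Pi.single j 1)
  simp only [matAct_smul_def] at this
  have h1 : ∀ (M : Matrix (Fin n) (Fin n) F), M.mulVec (Pi.single j 1) i = M i j := by
    intro M
    classical
    simp [Matrix.mulVec, dotProduct, Pi.single_apply, Finset.sum_ite_eq']
  rw [← h1 (a : Matrix (Fin n) (Fin n) F), ← h1 (a' : Matrix (Fin n) (Fin n) F), this]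

lemma Phi_surjective [IsSimpleModule ↥A (Fin n → F)] : Function.Surjective (Phi A) := by
  intro g
  obtain ⟨ρ, hρ⟩ := jacobson_density_surj F (R := ↥A) g
  exact ⟨ρ, LinearMap.ext fun v => hρ v⟩

lemma main_aux (hn : 1 ≤ n)
    (hirr : ∀ W : Submodule F (Fin n → F),
      (∀ M ∈ A, ∀ v ∈ W, M.mulVec v ∈ W) → W = ⊥ ∨ W = ⊤)
    (r : ℕ)
    (hr : IsLeast {k : ℕ | 0 < k ∧ ∃ M ∈ A, M.rank = k} r) :
    r ∣ n ∧
      ∃ (Δ : Type) (_ : DivisionRing Δ) (_ : Algebra F Δ),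
        Module.finrank F Δ = r ∧
        Nonempty (↥A ≃ₐ[F] Matrix (Fin (n / r)) (Fin (n / r)) Δ) := by
  classical
  haveI := matAct_isSimple A hn hirr
  letI : DivisionRing (Module.End ↥A (Fin n → F)) := Module.End.instDivisionRing
  haveI : Module.Finite (Module.End ↥A (Fin n → F)) (Fin n → F) :=
    Module.Finite.of_restrictScalars_finite F _ _
  -- D is finite-dimensional over F
  let L : Module.End ↥A (Fin n → F) →ₗ[F] ((Fin n → F) →ₗ[F] (Fin n → F)) :=
    { toFun := fun e =>
        { toFun := fun v => e v
          map_add' := e.map_add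
          map_smul' := fun c v => by
            show e (c • v) = c • e v
            rw [← algebraMap_smul ↥A c v, e.map_smul, algebraMap_smul] }
      map_add' := fun e f => rfl
      map_smul' := fun c e => rfl }
  have hLinj : Function.Injective L := fun e f h =>
    LinearMap.ext fun v => LinearMap.congr_fun h v
  haveI : FiniteDimensional F (Module.End ↥A (Fin n → F)) :=
    FiniteDimensional.of_injective L hLinj
  set d := Module.finrank F (Module.End ↥A (Fin n → F)) with hd
  set m := Module.finrank (Module.End ↥A (Fin n → F)) (Fin n → F) with hmdef
  have hdm : d * m = n := by
    have h := Module.finrank_mul_finrank F (Module.End ↥A (Fin n → F)) (Fin n → F)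
    rwa [Module.finrank_fin_fun] at h
  have hd0 : 0 < d := Module.finrank_pos
  haveI : Nonempty (Fin n) := ⟨⟨0, hn⟩⟩
  have hm0 : 0 < m := Module.finrank_pos
  set b := Module.finBasis (Module.End ↥A (Fin n → F)) (Fin n → F) with hb
  -- lower bound
  have hlow : ∀ k ∈ {k : ℕ | 0 < k ∧ ∃ M ∈ A, M.rank = k}, d ≤ k := by
    rintro k ⟨hk0, M, hM, hrank⟩
    rw [Matrix.rank] at hrank
    set W := LinearMap.range M.mulVecLin with hW
    have hWpos : 0 < Module.finrank F W := hrank ▸ hk0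
    haveI : Nontrivial W := Module.finrank_pos_iff.mp hWpos
    obtain ⟨w, hw0⟩ := exists_ne (0 : W)
    let Lw : Module.End ↥A (Fin n → F) →ₗ[F] (Fin n → F) :=
      { toFun := fun e => e (w : Fin n → F)
        map_add' := fun e f => rfl
        map_smul' := fun c e => rfl }
    have hLwinj : Function.Injective Lw := by
      intro e f h
      by_contra hne
      have hef : e - f ≠ 0 := sub_ne_zero.mpr hne
      have hinj : Function.Injective (e - f : Module.End ↥A (Fin n → F)) :=
        LinearMap.injective_of_ne_zero hef
      have hz : (e - f) (w : Fin n → F) = (e - f) 0 := by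
        rw [LinearMap.sub_apply, map_zero, show e (w : Fin n → F) = f (w : Fin n → F) from h,
          sub_self]
      exact hw0 (Subtype.ext (hinj hz))
    have hle : LinearMap.range Lw ≤ W := by
      rintro x ⟨e, rfl⟩
      obtain ⟨u, hu⟩ := w.2
      show e (w : Fin n → F) ∈ W
      have hu' : (⟨M, hM⟩ : ↥A) • u = (w : Fin n → F) := hu
      rw [← hu', e.map_smul, matAct_smul_def]
      exact ⟨e u, rfl⟩
    calc d = Module.finrank F (LinearMap.range Lw) :=
          (LinearMap.finrank_range_of_inj hLwinj).symm
      _ ≤ Module.finrank F W := Submodule.finrank_mono hle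
      _ = k := hrank
  -- upper bound: an element of rank exactly d
  have hup : d ∈ {k : ℕ | 0 < k ∧ ∃ M ∈ A, M.rank = k} := by
    set j0 : Fin m := ⟨0, hm0⟩ with hj0
    let f : Module.End (Module.End ↥A (Fin n → F)) (Fin n → F) :=
      { toFun := fun x => b.repr x j0 • b j0
        map_add' := fun x y => by
          show b.repr (x + y) j0 • b j0 = b.repr x j0 • b j0 + b.repr y j0 • b j0
          rw [map_add, Finsupp.add_apply, add_smul]
        map_smul' := fun dd x => by
          show b.repr (dd • x) j0 • b j0 = dd • (b.repr x j0 • b j0)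
          rw [map_smul, Finsupp.smul_apply, smul_eq_mul, mul_smul] }
    obtain ⟨ρ, hρ⟩ := Phi_surjective A f
    have hρv : ∀ v, (ρ : Matrix (Fin n) (Fin n) F).mulVec v = f v := fun v => by
      rw [← matAct_smul_def]
      exact LinearMap.congr_fun hρ v
    refine ⟨hd0, (ρ : Matrix (Fin n) (Fin n) F), ρ.2, ?_⟩
    rw [Matrix.rank]
    let Lb : Module.End ↥A (Fin n → F) →ₗ[F] (Fin n → F) :=
      { toFun := fun e => e (b j0)
        map_add' := fun e f => rfl
        map_smul' := fun c e => rfl }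
    have hLbinj : Function.Injective Lb := by
      intro e f h
      by_contra hne
      have hef : e - f ≠ 0 := sub_ne_zero.mpr hne
      have hinj : Function.Injective (e - f : Module.End ↥A (Fin n → F)) :=
        LinearMap.injective_of_ne_zero hef
      have hz : (e - f) (b j0) = (e - f) 0 := by
        rw [LinearMap.sub_apply, map_zero, show e (b j0) = f (b j0) from h, sub_self]
      exact b.ne_zero j0 (hinj hz)
    have hrange : LinearMap.range ((ρ : Matrix (Fin n) (Fin n) F).mulVecLin)
        = LinearMap.range Lb := by
      apply le_antisymm
      · rintro x ⟨v, rfl⟩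
        refine ⟨b.repr v j0, ?_⟩
        show (b.repr v j0) (b j0) = (ρ : Matrix (Fin n) (Fin n) F).mulVecLin v
        rw [Matrix.mulVecLin_apply, hρv v]
        rfl
      · rintro x ⟨e, rfl⟩
        refine ⟨e • b j0, ?_⟩
        rw [Matrix.mulVecLin_apply, hρv (e • b j0)]
        show b.repr (e • b j0) j0 • b j0 = Lb e
        rw [map_smul, Finsupp.smul_apply, b.repr_self, Finsupp.single_eq_same, smul_eq_mul,
          mul_one]
        rfl
    rw [hrange, LinearMap.finrank_range_of_inj hLbinj]
  have hrd : r = d := le_antisymm (hr.2 hup) (hlow r hr.1)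
  have hnr : n / r = m := by
    rw [hrd, ← hdm, Nat.mul_div_cancel_left m hd0]
  constructor
  · exact ⟨m, by rw [hrd, ← hdm]⟩
  refine ⟨(Module.End ↥A (Fin n → F))ᵐᵒᵖ, inferInstance, inferInstance, ?_, ?_⟩
  · rw [hrd]
    exact ((MulOpposite.opLinearEquiv F
      (M := Module.End ↥A (Fin n → F))).finrank_eq).symm
  · have e1 : ↥A ≃ₐ[F] Module.End (Module.End ↥A (Fin n → F)) (Fin n → F) :=
      AlgEquiv.ofBijective (Phi A) ⟨Phi_injective A, Phi_surjective A⟩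
    have hcomm : ∀ c : F, (endRingEquivMatrix b) (algebraMap F
        (Module.End (Module.End ↥A (Fin n → F)) (Fin n → F)) c)
        = algebraMap F (Matrix (Fin m) (Fin m) (Module.End ↥A (Fin n → F))ᵐᵒᵖ) c := by
      intro c
      ext i j
      show MulOpposite.op (b.repr ((algebraMap F
        (Module.End (Module.End ↥A (Fin n → F)) (Fin n → F)) c) (b j)) i) = _
      rw [Module.algebraMap_end_apply, ← algebraMap_smul (Module.End ↥A (Fin n → F)) c (b j),
        map_smul, Finsupp.smul_apply, b.repr_self, Matrix.algebraMap_matrix_apply]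
      by_cases hij : i = j
      · subst hij
        rw [Finsupp.single_eq_same, if_pos rfl, smul_eq_mul, mul_one,
          MulOpposite.algebraMap_apply]
      · rw [Finsupp.single_eq_of_ne hij, if_neg hij, smul_eq_mul, mul_zero,
          MulOpposite.op_zero]
    have e2 : Module.End (Module.End ↥A (Fin n → F)) (Fin n → F)
        ≃ₐ[F] Matrix (Fin m) (Fin m) (Module.End ↥A (Fin n → F))ᵐᵒᵖ :=
      AlgEquiv.ofRingEquiv hcomm
    have e3 : Matrix (Fin m) (Fin m) (Module.End ↥A (Fin n → F))ᵐᵒᵖ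
        ≃ₐ[F] Matrix (Fin (n / r)) (Fin (n / r)) (Module.End ↥A (Fin n → F))ᵐᵒᵖ :=
      Matrix.reindexAlgEquiv F _ (finCongr hnr.symm)
    exact ⟨(e1.trans e2).trans e3⟩

end Main

/-- An irreducible unital subalgebra of `M_n(F)` with minimal nonzero rank `r`
satisfies `r ∣ n` and is isomorphic to `M_{n/r}(Δ)` for a division `F`-algebra
`Δ` of dimension `r`. -/
theorem irreducible_subalgebra_structure
    {F : Type} [Field F] {n : ℕ} (hn : 1 ≤ n)
    (A : Subalgebra F (Matrix (Fin n) (Fin n) F))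
    (hirr : ∀ W : Submodule F (Fin n → F),
      (∀ M ∈ A, ∀ v ∈ W, M.mulVec v ∈ W) → W = ⊥ ∨ W = ⊤)
    (r : ℕ)
    (hr : IsLeast {k : ℕ | 0 < k ∧ ∃ M ∈ A, M.rank = k} r) :
    r ∣ n ∧
      ∃ (Δ : Type) (_ : DivisionRing Δ) (_ : Algebra F Δ),
        Module.finrank F Δ = r ∧
        Nonempty (A ≃ₐ[F] Matrix (Fin (n / r)) (Fin (n / r)) Δ) :=
  main_aux A hn hirr r hr
end

section
/- Let F ≤ K be fields and S ⊆ M_n(K) an absolutely irreducible multiplicative semigroup with tr(s) ∈ F for all s ∈ S and tr(S) ≠ {0}. Then dim_F Alg_F(S) = dim_K Alg_K(S) = n². -/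
open Matrix Module Submodule

lemma trace_mul_stdBasisMatrix_aux {K : Type} [Field K] {n : ℕ}
    (A : Matrix (Fin n) (Fin n) K) (i j : Fin n) :
    (A * Matrix.single i j (1 : K)).trace = A j i := by
  simp [Matrix.trace, Matrix.diag, Matrix.mul_apply, Matrix.single, ite_and,
    Finset.sum_ite_eq]

/-- span of a mult-closed spanning-with-1 set containing a nonzero elt is everything -/
lemma span_eq_top_aux {K : Type} [Field K] {n : ℕ}
    (S : Set (Matrix (Fin n) (Fin n) K))
    (hsemi : ∀ A ∈ S, ∀ B ∈ S, A * B ∈ S)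
    (habs : Algebra.adjoin K S = ⊤)
    (htr0 : ∃ A ∈ S, Matrix.trace A ≠ 0) :
    Submodule.span K S = ⊤ := by
  classical
  set W : Submodule K (Matrix (Fin n) (Fin n) K) := Submodule.span K S with hW
  have hWmul : ∀ x ∈ W, ∀ y ∈ W, x * y ∈ W := by
    intro x hx y hy
    have h : W * W ≤ W := by
      rw [hW, Submodule.span_mul_span]
      apply Submodule.span_le.2
      rintro _ ⟨a, ha, b, hb, rfl⟩
      exact Submodule.subset_span (hsemi a ha b hb)
    exact h (Submodule.mul_mem_mul hx hy)
  -- the submonoid `insert 1 S`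
  let T : Submonoid (Matrix (Fin n) (Fin n) K) :=
    { carrier := insert 1 S
      one_mem' := Set.mem_insert _ _
      mul_mem' := by
        rintro a b (rfl | ha) (rfl | hb)
        · simp
        · simpa using Or.inr hb
        · simpa using Or.inr ha
        · exact Or.inr (hsemi a ha b hb) }
  have hTle : Submonoid.closure S ≤ T :=
    Submonoid.closure_le.2 (show S ⊆ (T : Set _) from Set.subset_insert 1 S)
  have hclosure : (Submonoid.closure S : Set (Matrix (Fin n) (Fin n) K)) ⊆ insert 1 S :=
    fun x hx => hTle hx
  have htop : ∀ X : Matrix (Fin n) (Fin n) K, ∃ c : K, X - c • 1 ∈ W := by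
    intro X
    have hX : X ∈ Subalgebra.toSubmodule (Algebra.adjoin K S) := by rw [habs]; trivial
    rw [Algebra.adjoin_eq_span] at hX
    have hX2 : X ∈ Submodule.span K (insert (1 : Matrix (Fin n) (Fin n) K) S) :=
      Submodule.span_mono hclosure hX
    rw [Submodule.span_insert, Submodule.mem_sup] at hX2
    obtain ⟨y, hy, z, hz, rfl⟩ := hX2
    obtain ⟨c, rfl⟩ := Submodule.mem_span_singleton.1 hy
    exact ⟨c, by simpa using hz⟩
  have hleft : ∀ X : Matrix (Fin n) (Fin n) K, ∀ w ∈ W, X * w ∈ W := by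
    intro X w hw
    obtain ⟨c, hc⟩ := htop X
    have h : X * w = (X - c • 1) * w + c • w := by
      rw [sub_mul, smul_mul_assoc, one_mul, sub_add_cancel]
    rw [h]
    exact W.add_mem (hWmul _ hc _ hw) (W.smul_mem _ hw)
  have hright : ∀ X : Matrix (Fin n) (Fin n) K, ∀ w ∈ W, w * X ∈ W := by
    intro X w hw
    obtain ⟨c, hc⟩ := htop X
    have h : w * X = w * (X - c • 1) + c • w := by
      rw [mul_sub, mul_smul_comm, mul_one, sub_add_cancel]
    rw [h]
    exact W.add_mem (hWmul _ hw _ hc) (W.smul_mem _ hw)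
  obtain ⟨A₀, hA₀S, hA₀tr⟩ := htr0
  have hA₀W : A₀ ∈ W := Submodule.subset_span hA₀S
  have hA₀ne : A₀ ≠ 0 := fun h => hA₀tr (by simp [h])
  obtain ⟨i, j, hij⟩ : ∃ i j, A₀ i j ≠ 0 := by
    by_contra h
    push_neg at h
    exact hA₀ne (by ext i j; simp [h])
  rw [eq_top_iff]
  intro X _
  rw [matrix_eq_sum_single X]
  refine Submodule.sum_mem _ fun k _ => Submodule.sum_mem _ fun l _ => ?_
  have key : Matrix.single k i (1 : K) * A₀ *
      Matrix.single j l ((A₀ i j)⁻¹ * X k l) ∈ W :=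
    hright _ _ (hleft _ _ hA₀W)
  have heq : Matrix.single k i (1 : K) * A₀ *
      Matrix.single j l ((A₀ i j)⁻¹ * X k l) = Matrix.single k l (X k l) := by
    ext a b
    by_cases hb : b = l
    · subst hb
      rw [Matrix.mul_single_apply_same]
      by_cases ha : a = k
      · subst ha
        rw [Matrix.single_mul_apply_same]
        rw [one_mul, ← mul_assoc, mul_inv_cancel₀ hij, one_mul]
        simp
      · rw [Matrix.single_mul_apply_of_ne _ _ _ _ _ ha, zero_mul]
        symm
        apply Matrix.single_apply_of_ne
        tauto
    · rw [Matrix.mul_single_apply_of_ne _ _ _ _ _ hb]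
      symm
      apply Matrix.single_apply_of_ne
      tauto
  rw [heq] at key
  exact key

/-- If `S` is an absolutely irreducible semigroup in `M_n(K)` with traces in a
subfield `F` and not all traces zero, then the `F`-algebra generated by `S` has
`F`-dimension `n²`, equal to the `K`-dimension of the `K`-algebra it generates. -/
theorem finrank_adjoin_of_traces_in_subfield
    {F K : Type} [Field F] [Field K] [Algebra F K] {n : ℕ} (hn : 1 ≤ n)
    (S : Set (Matrix (Fin n) (Fin n) K))
    (hsemi : ∀ A ∈ S, ∀ B ∈ S, A * B ∈ S)
    (habs : Algebra.adjoin K S = ⊤)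
    (htr : ∀ A ∈ S, Matrix.trace A ∈ (algebraMap F K).range)
    (htr0 : ∃ A ∈ S, Matrix.trace A ≠ 0) :
    Module.finrank F (Algebra.adjoin F S) = n ^ 2 ∧
    Module.finrank K (Algebra.adjoin K S) = n ^ 2 := by
  classical
  have hKtop : Submodule.span K S = ⊤ := span_eq_top_aux S hsemi habs htr0
  -- a `K`-basis of `M_n(K)` inside `S`
  obtain ⟨B, hBS, hBspan, hBli⟩ := exists_linearIndependent K S
  have hBspan' : Submodule.span K (Set.range ((↑) : B → Matrix (Fin n) (Fin n) K)) = ⊤ := by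
    rw [Subtype.range_coe, hBspan, hKtop]
  let bB : Basis B K (Matrix (Fin n) (Fin n) K) := Basis.mk hBli hBspan'.ge
  have hBfin : B.Finite := hBli.setFinite
  haveI : Fintype B := hBfin.fintype
  have hcard : Fintype.card B = n * n := by
    have h1 := Module.finrank_eq_card_basis bB
    rw [Module.finrank_matrix] at h1
    simpa using h1.symm
  let e : B ≃ (Fin n × Fin n) := Fintype.equivOfCardEq (by simp [hcard])
  let b : Basis (Fin n × Fin n) K (Matrix (Fin n) (Fin n) K) := bB.reindex e
  have hbS : ∀ p, b p ∈ S := by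
    intro p
    have h : b p = ((e.symm p : B) : Matrix (Fin n) (Fin n) K) := by
      simp [b, bB, Basis.reindex_apply, Basis.mk_apply]
    rw [h]; exact hBS (e.symm p).2
  -- injectivity of the trace pairing
  have hTinj : ∀ A : Matrix (Fin n) (Fin n) K, (∀ p, (A * b p).trace = 0) → A = 0 := by
    intro A hA
    have hphi : (Matrix.traceLinearMap (Fin n) K K).comp (LinearMap.mulLeft K A) = 0 :=
      b.ext fun p => by simpa using hA p
    have hall : ∀ X, (A * X).trace = 0 := fun X => by
      have h := LinearMap.congr_fun hphi X
      simpa using h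
    ext a c
    have h := hall (Matrix.single c a 1)
    rw [trace_mul_stdBasisMatrix_aux] at h
    simpa using h
  -- the Gram matrix over F
  have htr' := htr
  choose g hg using htr'
  let G₀ : Matrix (Fin n × Fin n) (Fin n × Fin n) F :=
    Matrix.of fun p q => g (b p * b q) (hsemi _ (hbS p) _ (hbS q))
  let G : Matrix (Fin n × Fin n) (Fin n × Fin n) K := G₀.map (algebraMap F K)
  have hGpq : ∀ p q, G p q = (b p * b q).trace := fun p q => hg _ _
  have hdetG : G.det ≠ 0 := by
    intro h
    obtain ⟨v, hv0, hv⟩ := Matrix.exists_vecMul_eq_zero_iff.2 h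
    set A : Matrix (Fin n) (Fin n) K := ∑ p, v p • b p with hA
    have hAtr : ∀ q, (A * b q).trace = 0 := by
      intro q
      have h2 : (A * b q).trace = ∑ p, v p * (b p * b q).trace := by
        rw [hA, Finset.sum_mul]
        simp [smul_mul_assoc]
      rw [h2]
      have h3 := congrFun hv q
      simpa [Matrix.vecMul, dotProduct, hGpq] using h3
    have hA0 : A = 0 := hTinj A hAtr
    exact hv0 (funext fun p =>
      Fintype.linearIndependent_iff.1 b.linearIndependent v (hA ▸ hA0) p)
  have hG₀det : IsUnit G₀.det := by
    rw [isUnit_iff_ne_zero]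
    intro h
    refine hdetG ?_
    have he : G = (algebraMap F K).mapMatrix G₀ := rfl
    rw [he, ← RingHom.map_det, h, map_zero]
  have hGunit : IsUnit G := (Matrix.isUnit_iff_isUnit_det G).2 (isUnit_iff_ne_zero.2 hdetG)
  -- everything with F-rational trace pairings lies in the F-span of b
  have hkey : ∀ A : Matrix (Fin n) (Fin n) K,
      (∀ q, (A * b q).trace ∈ (algebraMap F K).range) →
      A ∈ Submodule.span F (Set.range b) := by
    intro A hA
    choose t ht using hA
    set c : (Fin n × Fin n) → K := fun p => b.repr A p with hc
    have hcA : A = ∑ p, c p • b p := (b.sum_repr A).symm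
    have hvm : ∀ q, Matrix.vecMul c G q = algebraMap F K (t q) := by
      intro q
      rw [ht]
      have h2 : (A * b q).trace = ∑ p, c p * (b p * b q).trace := by
        conv_lhs => rw [hcA]
        rw [Finset.sum_mul]
        simp [smul_mul_assoc]
      rw [h2]
      simp [Matrix.vecMul, dotProduct, hGpq]
    set c₀ : (Fin n × Fin n) → F := Matrix.vecMul t G₀⁻¹ with hc₀
    have hcc : c = fun p => algebraMap F K (c₀ p) := by
      have hinj : Function.Injective G.vecMul := Matrix.vecMul_injective_iff_isUnit.2 hGunit
      apply hinj
      funext q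
      show Matrix.vecMul c G q = Matrix.vecMul _ G q
      rw [hvm]
      have hmap : Matrix.vecMul (fun p => algebraMap F K (c₀ p)) G q
          = algebraMap F K (Matrix.vecMul c₀ G₀ q) := by
        simp [Matrix.vecMul, dotProduct, G, map_sum]
      rw [hmap, hc₀, Matrix.vecMul_vecMul, Matrix.nonsing_inv_mul G₀ hG₀det, Matrix.vecMul_one]
    rw [hcA, hcc]
    refine Submodule.sum_mem _ fun p _ => ?_
    rw [algebraMap_smul]
    exact Submodule.smul_mem _ _ (Submodule.subset_span (Set.mem_range_self p))
  have hSsub : S ⊆ (Submodule.span F (Set.range b) : Set (Matrix (Fin n) (Fin n) K)) :=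
    fun s hs => hkey s fun q => htr _ (hsemi s hs _ (hbS q))
  have hone : (1 : Matrix (Fin n) (Fin n) K) ∈ Submodule.span F (Set.range b) :=
    hkey 1 fun q => by rw [one_mul]; exact htr _ (hbS q)
  have hVeq : Submodule.span F S = Submodule.span F (Set.range b) :=
    le_antisymm (Submodule.span_le.2 hSsub)
      (Submodule.span_mono (by rintro _ ⟨p, rfl⟩; exact hbS p))
  have hV1 : (1 : Matrix (Fin n) (Fin n) K) ∈ Submodule.span F S := by rw [hVeq]; exact hone
  have hVmul : ∀ x y : Matrix (Fin n) (Fin n) K,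
      x ∈ Submodule.span F S → y ∈ Submodule.span F S → x * y ∈ Submodule.span F S := by
    intro x y hx hy
    have h : Submodule.span F S * Submodule.span F S ≤ Submodule.span F S := by
      rw [Submodule.span_mul_span]
      refine Submodule.span_le.2 ?_
      rintro _ ⟨a, ha, b', hb', rfl⟩
      exact Submodule.subset_span (hsemi a ha b' hb')
    exact h (Submodule.mul_mem_mul hx hy)
  have hadj : Subalgebra.toSubmodule (Algebra.adjoin F S) = Submodule.span F S := by
    apply le_antisymm
    · have h : Algebra.adjoin F S ≤ (Submodule.span F S).toSubalgebra hV1 hVmul :=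
        Algebra.adjoin_le Submodule.subset_span
      exact fun x hx => h hx
    · exact Submodule.span_le.2 Algebra.subset_adjoin
  have hbliF : LinearIndependent F b :=
    b.linearIndependent.restrict_scalars (fun x y hxy => by
      have h : algebraMap F K x = algebraMap F K y := by
        rw [Algebra.algebraMap_eq_smul_one, Algebra.algebraMap_eq_smul_one]
        exact hxy
      exact (algebraMap F K).injective h)
  let bF : Basis (Fin n × Fin n) F (Submodule.span F (Set.range b)) := Basis.span hbliF
  have hfr : Module.finrank F (Submodule.span F (Set.range ⇑b)) = n ^ 2 := by
    rw [Module.finrank_eq_card_basis bF]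
    simp [sq]
  constructor
  · have h1 : Module.finrank F (Algebra.adjoin F S) =
        Module.finrank F (Subalgebra.toSubmodule (Algebra.adjoin F S)) := rfl
    rw [h1, hadj, hVeq, hfr]
  · rw [habs, subalgebra_top_finrank_eq_submodule_top_finrank, finrank_top,
      Module.finrank_matrix]
    simp [sq]
end

section
/- Let ℍ denote the real quaternions and n ≥ 2. Then M_n(ℍ), as a real vector space, is spanned by the identity matrix together with the set of nilpotent matrices in M_n(ℍ). -/
open Matrix

private def qI : Quaternion ℝ := ⟨0,1,0,0⟩
private def qJ : Quaternion ℝ := ⟨0,0,1,0⟩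
private def qK : Quaternion ℝ := ⟨0,0,0,1⟩

private lemma qII : qI * qI = -1 := by ext <;> simp [Quaternion.re_mul, Quaternion.imI_mul, Quaternion.imJ_mul, Quaternion.imK_mul, Quaternion.re_one, Quaternion.imI_one, Quaternion.imJ_one, Quaternion.imK_one] <;> simp [qI]
private lemma qJJ : qJ * qJ = -1 := by ext <;> simp [Quaternion.re_mul, Quaternion.imI_mul, Quaternion.imJ_mul, Quaternion.imK_mul, Quaternion.re_one, Quaternion.imI_one, Quaternion.imJ_one, Quaternion.imK_one] <;> simp [qJ]
private lemma qKK : qK * qK = -1 := by ext <;> simp [Quaternion.re_mul, Quaternion.imI_mul, Quaternion.imJ_mul, Quaternion.imK_mul, Quaternion.re_one, Quaternion.imI_one, Quaternion.imJ_one, Quaternion.imK_one] <;> simp [qK]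
private lemma qIJ : qI * qJ + qJ * qI = 0 := by ext <;> simp [Quaternion.re_mul, Quaternion.imI_mul, Quaternion.imJ_mul, Quaternion.imK_mul, Quaternion.re_zero, Quaternion.imI_zero, Quaternion.imJ_zero, Quaternion.imK_zero] <;> simp [qI, qJ]
private lemma qJK : qJ * qK + qK * qJ = 0 := by ext <;> simp [Quaternion.re_mul, Quaternion.imI_mul, Quaternion.imJ_mul, Quaternion.imK_mul, Quaternion.re_zero, Quaternion.imI_zero, Quaternion.imJ_zero, Quaternion.imK_zero] <;> simp [qJ, qK]
private lemma qKI : qK * qI + qI * qK = 0 := by ext <;> simp [Quaternion.re_mul, Quaternion.imI_mul, Quaternion.imJ_mul, Quaternion.imK_mul, Quaternion.re_zero, Quaternion.imI_zero, Quaternion.imJ_zero, Quaternion.imK_zero] <;> simp [qK, qI]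

private abbrev Sset (n : ℕ) : Set (Matrix (Fin n) (Fin n) (Quaternion ℝ)) :=
  {(1 : Matrix (Fin n) (Fin n) (Quaternion ℝ))} ∪
    {N : Matrix (Fin n) (Fin n) (Quaternion ℝ) | IsNilpotent N}

private lemma sq_zero_mem {n : ℕ} (A : Matrix (Fin n) (Fin n) (Quaternion ℝ)) (h : A * A = 0) :
    A ∈ Submodule.span ℝ (Sset n) :=
  Submodule.subset_span (Set.mem_union_right _ ⟨2, by rw [pow_two, h]⟩)

private lemma stdBasisMatrix_neg {n : ℕ} (i j : Fin n) (a : Quaternion ℝ) :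
    single i j (-a) = -single i j a := by
  rw [← neg_one_smul ℝ (single i j a), smul_single, neg_one_smul]

private lemma quad_mem {n : ℕ} {r s : Fin n} (hrs : r ≠ s) (x y z w : Quaternion ℝ)
    (h1 : x*x + y*z = 0) (h2 : x*y + y*w = 0) (h3 : z*x + w*z = 0) (h4 : z*y + w*w = 0) :
    (single r r x + single r s y + single s r z + single s s w)
      ∈ Submodule.span ℝ (Sset n) := by
  refine sq_zero_mem _ ?_
  have e1 : single r r (x*x) + single r r (y*z) = 0 := by
    rw [← single_add, h1, single_zero]
  have e2 : single r s (x*y) + single r s (y*w) = 0 := by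
    rw [← single_add, h2, single_zero]
  have e3 : single s r (z*x) + single s r (w*z) = 0 := by
    rw [← single_add, h3, single_zero]
  have e4 : single s s (z*y) + single s s (w*w) = 0 := by
    rw [← single_add, h4, single_zero]
  simp only [add_mul, mul_add, single_mul_single_same, single_mul_single_of_ne, hrs, hrs.symm,
    ne_eq, not_false_iff, add_zero, zero_add]
  calc single r r (x * x) + single s r (z * x) +
        (single r s (x * y) + single s s (z * y)) +
        (single r r (y * z) + single s r (w * z)) +
        (single r s (y * w) + single s s (w * w))
      = (single r r (x*x) + single r r (y*z))
        + (single r s (x*y) + single r s (y*w))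
        + (single s r (z*x) + single s r (w*z))
        + (single s s (z*y) + single s s (w*w)) := by abel
    _ = 0 := by rw [e1, e2, e3, e4]; simp

private lemma offdiag_mem {n : ℕ} {r s : Fin n} (hrs : r ≠ s) (q : Quaternion ℝ) :
    single r s q ∈ Submodule.span ℝ (Sset n) := by
  refine sq_zero_mem _ ?_
  simp only [single_mul_single_of_ne, hrs.symm, ne_eq, not_false_iff]

private lemma diagdiff_mem {n : ℕ} {r s : Fin n} (hrs : r ≠ s) (q : Quaternion ℝ) :
    single r r q - single s s q ∈ Submodule.span ℝ (Sset n) := by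
  have hA := quad_mem hrs q q (-q) (-q)
    (by rw [mul_neg, add_neg_cancel]) (by rw [mul_neg, add_neg_cancel])
    (by rw [neg_mul, neg_mul_neg, neg_add_cancel]) (by rw [neg_mul, neg_mul_neg, neg_add_cancel])
  have heq : single r r q - single s s q
      = (single r r q + single r s q + single s r (-q)
          + single s s (-q)) - single r s q - single s r (-q) := by
    rw [stdBasisMatrix_neg s r, stdBasisMatrix_neg s s]; abel
  rw [heq]
  exact sub_mem (sub_mem hA (offdiag_mem hrs q)) (offdiag_mem hrs.symm (-q))

private lemma diagsum_mem {n : ℕ} {r s : Fin n} (hrs : r ≠ s) (q u : Quaternion ℝ)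
    (hq : q*q = -1) (hu : u*u = -1) (hqu : q*u + u*q = 0) :
    single r r q + single s s q ∈ Submodule.span ℝ (Sset n) := by
  have hA := quad_mem hrs q u (-u) q
    (by rw [hq, mul_neg, hu, neg_neg, neg_add_cancel]) hqu
    (by rw [neg_mul, mul_neg, ← neg_add, add_comm (u*q), hqu, neg_zero])
    (by rw [neg_mul, hu, hq, neg_neg, add_neg_cancel])
  have heq : single r r q + single s s q
      = (single r r q + single r s u + single s r (-u)
          + single s s q) - single r s u - single s r (-u) := by
    abel
  rw [heq]
  exact sub_mem (sub_mem hA (offdiag_mem hrs u)) (offdiag_mem hrs.symm (-u))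

private lemma one_eq_sum {n : ℕ} :
    (1 : Matrix (Fin n) (Fin n) (Quaternion ℝ)) = ∑ s, single s s 1 := by
  refine Matrix.ext fun a b => ?_
  rw [Matrix.sum_apply]
  by_cases h : a = b
  · subst h
    rw [Matrix.one_apply_eq, Finset.sum_eq_single a (fun s _ hs => by simp [single, hs])
      (by simp)]
    simp [single]
  · rw [Matrix.one_apply_ne h]
    refine (Finset.sum_eq_zero fun s _ => ?_).symm
    simp only [single, of_apply]
    rw [if_neg]; rintro ⟨rfl, rfl⟩; exact h rfl

private lemma one_diag_mem {n : ℕ} (hn : 2 ≤ n) (r : Fin n) :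
    single r r (1 : Quaternion ℝ) ∈ Submodule.span ℝ (Sset n) := by
  have hn0 : (n : ℝ) ≠ 0 := by positivity
  have key : (n : ℝ) • single r r (1 : Quaternion ℝ)
      = (∑ s : Fin n, (single r r (1 : Quaternion ℝ) - single s s 1)) + 1 := by
    rw [Finset.sum_sub_distrib, Finset.sum_const, Finset.card_univ, Fintype.card_fin,
      ← one_eq_sum, Nat.cast_smul_eq_nsmul ℝ, sub_add_cancel]
  have heq : single r r (1 : Quaternion ℝ)
      = (n : ℝ)⁻¹ • ((∑ s : Fin n, (single r r (1 : Quaternion ℝ) - single s s 1)) + 1) := by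
    rw [← key, inv_smul_smul₀ hn0]
  rw [heq]
  refine Submodule.smul_mem _ _ (add_mem (Submodule.sum_mem _ fun s _ => ?_)
    (Submodule.subset_span (Set.mem_union_left _ rfl)))
  rcases eq_or_ne r s with rfl | h
  · rw [sub_self]; exact zero_mem _
  · exact diagdiff_mem h 1

private lemma pure_diag_mem {n : ℕ} (hn : 2 ≤ n) (r : Fin n) (q u : Quaternion ℝ)
    (hq : q*q = -1) (hu : u*u = -1) (hqu : q*u + u*q = 0) :
    single r r q ∈ Submodule.span ℝ (Sset n) := by
  haveI : Nontrivial (Fin n) := Fin.nontrivial_iff_two_le.mpr hn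
  obtain ⟨s, hs⟩ := exists_ne r
  have heq : single r r q = (2⁻¹ : ℝ) •
      ((single r r q - single s s q) + (single r r q + single s s q)) := by
    rw [sub_add_add_cancel, ← two_smul ℝ, smul_smul]; norm_num
  rw [heq]
  exact Submodule.smul_mem _ _
    (add_mem (diagdiff_mem hs.symm q) (diagsum_mem hs.symm q u hq hu hqu))

private lemma diag_mem {n : ℕ} (hn : 2 ≤ n) (r : Fin n) (q : Quaternion ℝ) :
    single r r q ∈ Submodule.span ℝ (Sset n) := by
  have hdec : single r r q
      = q.re • single r r (1 : Quaternion ℝ) + q.imI • single r r qI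
        + q.imJ • single r r qJ + q.imK • single r r qK := by
    have hq : q = q.re • (1 : Quaternion ℝ) + q.imI • qI + q.imJ • qJ + q.imK • qK := by
      ext <;> simp [Quaternion.re_one, Quaternion.imI_one, Quaternion.imJ_one, Quaternion.imK_one, Quaternion.re_smul, Quaternion.imI_smul, Quaternion.imJ_smul, Quaternion.imK_smul] <;> simp [qI, qJ, qK]
    conv_lhs => rw [hq]
    simp only [single_add, ← smul_single]
  rw [hdec]
  exact add_mem (add_mem (add_mem
    (Submodule.smul_mem _ _ (one_diag_mem hn r))
    (Submodule.smul_mem _ _ (pure_diag_mem hn r qI qJ qII qJJ qIJ)))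
    (Submodule.smul_mem _ _ (pure_diag_mem hn r qJ qK qJJ qKK qJK)))
    (Submodule.smul_mem _ _ (pure_diag_mem hn r qK qI qKK qII qKI))

/-- For `n ≥ 2`, `M_n(ℍ)` is spanned as a real vector space by the identity
matrix together with the nilpotent matrices. -/
theorem matrix_quaternion_spanned_by_one_and_nilpotents
    {n : ℕ} (hn : 2 ≤ n) :
    Submodule.span ℝ
      ({(1 : Matrix (Fin n) (Fin n) (Quaternion ℝ))} ∪
        {N : Matrix (Fin n) (Fin n) (Quaternion ℝ) | IsNilpotent N}) = ⊤ := by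
  rw [eq_top_iff]
  rintro M -
  rw [matrix_eq_sum_single M]
  refine Submodule.sum_mem _ fun r _ => Submodule.sum_mem _ fun s _ => ?_
  rcases eq_or_ne r s with rfl | hrs
  · exact diag_mem hn r (M r r)
  · exact offdiag_mem hrs (M r s)
end

section
/- Let F be an algebraically closed field and n ≥ 1. If S ⊆ M_n(F) is an irreducible multiplicative semigroup, then the F-algebra generated by S equals M_n(F) (Burnside's theorem). -/
open Matrix Module

section Aux

variable {F : Type} [Field F] {n : ℕ}

/-- `b ↦ b *ᵥ v` as a linear map in the matrix `b`. -/
def mulVecRight (v : Fin n → F) : Matrix (Fin n) (Fin n) F →ₗ[F] (Fin n → F) where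
  toFun b := b.mulVec v
  map_add' a b := Matrix.add_mulVec a b v
  map_smul' c b := by simp [Matrix.smul_mulVec]

/-- `b ↦ y ᵥ* b` as a linear map in the matrix `b`. -/
def vecMulLeft (y : Fin n → F) : Matrix (Fin n) (Fin n) F →ₗ[F] (Fin n → F) where
  toFun b := Matrix.vecMul y b
  map_add' a b := by ext j; simp [Matrix.vecMul_add]
  map_smul' c b := by
    ext j
    simp only [Matrix.vecMul, dotProduct, Matrix.smul_apply, smul_eq_mul,
      RingHom.id_apply, Pi.smul_apply, Finset.mul_sum]
    exact Finset.sum_congr rfl fun i _ => by ring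

lemma mul_vecMulVec_mul (a b : Matrix (Fin n) (Fin n) F) (x y : Fin n → F) :
    a * Matrix.vecMulVec x y * b = Matrix.vecMulVec (a.mulVec x) (Matrix.vecMul y b) := by
  ext i j
  simp only [Matrix.mul_apply, Matrix.vecMulVec_apply, Matrix.mulVec, Matrix.vecMul,
    dotProduct, Finset.sum_mul, Finset.mul_sum]
  apply Finset.sum_congr rfl; intro k _
  apply Finset.sum_congr rfl; intro l _
  ring

variable (S : Set (Matrix (Fin n) (Fin n) F))
    (hsemi : ∀ A ∈ S, ∀ B ∈ S, A * B ∈ S)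
    (hirr : ∀ W : Submodule F (Fin n → F),
      (∀ A ∈ S, ∀ v ∈ W, A.mulVec v ∈ W) → W = ⊥ ∨ W = ⊤)

include hirr in
/-- transitivity of the adjoined algebra on nonzero vectors -/
lemma burnside_cyclic {v : Fin n → F} (hv : v ≠ 0) (u : Fin n → F) :
    ∃ a ∈ Algebra.adjoin F S, a.mulVec v = u := by
  set A := Algebra.adjoin F S with hA
  set W : Submodule F (Fin n → F) :=
    Submodule.map (mulVecRight v) (Subalgebra.toSubmodule A) with hW
  have hWinv : ∀ B ∈ S, ∀ w ∈ W, B.mulVec w ∈ W := by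
    rintro B hB w ⟨b, hb, rfl⟩
    exact ⟨B * b, A.mul_mem (Algebra.subset_adjoin hB) hb,
      (Matrix.mulVec_mulVec v B b).symm⟩
  rcases hirr W hWinv with h | h
  · exfalso
    have hvW : v ∈ W := ⟨1, A.one_mem, Matrix.one_mulVec v⟩
    rw [h] at hvW
    exact hv (by simpa using hvW)
  · have : u ∈ W := h ▸ Submodule.mem_top
    rcases this with ⟨a, ha, hau⟩
    exact ⟨a, ha, hau⟩

include hirr in
/-- dual transitivity: row vectors `y ᵥ* b` fill out the space -/
lemma burnside_cocyclic {y : Fin n → F} (hy : y ≠ 0) (w : Fin n → F) :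
    ∃ b ∈ Algebra.adjoin F S, Matrix.vecMul y b = w := by
  set A := Algebra.adjoin F S with hA
  set R : Submodule F (Fin n → F) :=
    Submodule.map (vecMulLeft y) (Subalgebra.toSubmodule A) with hR
  suffices hRtop : R = ⊤ by
    have : w ∈ R := hRtop ▸ Submodule.mem_top
    rcases this with ⟨b, hb, hbw⟩
    exact ⟨b, hb, hbw⟩
  by_contra hne
  obtain ⟨f, hf0, hfmap⟩ :=
    Submodule.exists_dual_map_eq_bot_of_lt_top (lt_top_iff_ne_top.mpr hne) inferInstance
  set z : Fin n → F := fun i => f (fun j => if i = j then 1 else 0) with hz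
  have hfz : ∀ r : Fin n → F, f r = dotProduct r z := by
    intro r
    rw [LinearMap.pi_apply_eq_sum_univ f r]
    simp [dotProduct, hz, smul_eq_mul]
  have hzero : ∀ r ∈ R, dotProduct r z = 0 := by
    intro r hr
    rw [← hfz]
    have : f r ∈ Submodule.map f R := ⟨r, hr, rfl⟩
    rwa [hfmap, Submodule.mem_bot] at this
  have hz0 : z ≠ 0 := by
    intro h
    apply hf0
    refine LinearMap.ext fun r => ?_
    rw [hfz r, h]
    simp
  -- the common kernel submodule
  set U : Submodule F (Fin n → F) :=
    { carrier := {u | ∀ b ∈ A, dotProduct (Matrix.vecMul y b) u = 0}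
      add_mem' := by intro u1 u2 h1 h2 b hb; rw [dotProduct_add, h1 b hb, h2 b hb, add_zero]
      zero_mem' := by intro b hb; simp
      smul_mem' := by intro c u hu b hb; rw [dotProduct_smul, hu b hb, smul_zero] } with hU
  have hUinv : ∀ B ∈ S, ∀ u ∈ U, B.mulVec u ∈ U := by
    intro B hB u hu b hb
    rw [dotProduct_mulVec, Matrix.vecMul_vecMul]
    exact hu (b * B) (A.mul_mem hb (Algebra.subset_adjoin hB))
  have hzU : z ∈ U := by
    intro b hb
    exact hzero _ ⟨b, hb, rfl⟩
  rcases hirr U hUinv with h | h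
  · rw [h] at hzU; exact hz0 (by simpa using hzU)
  · apply hy
    ext i
    have : (fun j => if i = j then (1:F) else 0) ∈ U := h ▸ Submodule.mem_top
    have h1 := this 1 A.one_mem
    rw [Matrix.vecMul_one] at h1
    simpa [dotProduct, mul_ite] using h1

end Aux

/-- Burnside's theorem: over an algebraically closed field, an irreducible
semigroup of matrices generates the full matrix algebra. -/
theorem burnside_algebraically_closed
    {F : Type} [Field F] [IsAlgClosed F] {n : ℕ} (hn : 1 ≤ n)
    (S : Set (Matrix (Fin n) (Fin n) F))
    (hsemi : ∀ A ∈ S, ∀ B ∈ S, A * B ∈ S)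
    (hirr : ∀ W : Submodule F (Fin n → F),
      (∀ A ∈ S, ∀ v ∈ W, A.mulVec v ∈ W) → W = ⊥ ∨ W = ⊤) :
    Algebra.adjoin F S = ⊤ := by
  haveI : NeZero n := ⟨by omega⟩
  set A := Algebra.adjoin F S with hA
  -- the set of ranks of nonzero elements of A
  set P : Set ℕ := {r | ∃ E ∈ A, E ≠ 0 ∧ E.rank = r} with hP
  have hPne : P.Nonempty := ⟨(1 : Matrix (Fin n) (Fin n) F).rank, 1, A.one_mem, one_ne_zero, rfl⟩
  obtain ⟨E, hEA, hE0, hErank⟩ : ∃ E ∈ A, E ≠ 0 ∧ E.rank = sInf P := Nat.sInf_mem hPne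
  -- rank E ≠ 0
  have hrank_ne : E.rank ≠ 0 := by
    intro h
    apply hE0
    have : LinearMap.range E.mulVecLin = ⊥ := Submodule.finrank_eq_zero.mp h
    have h2 : E.mulVecLin = 0 := LinearMap.range_eq_bot.mp this
    ext i j
    have := congrFun (congrArg (fun f => f (Pi.single j 1)) (congrArg DFunLike.coe h2)) i
    simpa [Matrix.mulVecLin_apply] using this
  -- rank E is not ≥ 2
  have hrank_lt : E.rank < 2 := by
    by_contra hge
    push_neg at hge
    set W : Submodule F (Fin n → F) := LinearMap.range E.mulVecLin with hWdef
    have hWrank : finrank F W = E.rank := rfl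
    have h2W : 2 ≤ finrank F W := by rw [hWrank]; exact hge
    -- pick w₁ ≠ 0 in W
    have hWne : W ≠ ⊥ := by
      intro h
      apply hrank_ne
      rw [← hWrank, h]
      simp
    obtain ⟨w₁, hw₁W, hw₁0⟩ := Submodule.ne_bot_iff W |>.mp hWne
    -- pick w₂ ∈ W outside span {w₁}
    have hspan_lt : ¬ (W ≤ Submodule.span F {w₁}) := by
      intro hle
      have := Submodule.finrank_mono hle
      rw [finrank_span_singleton hw₁0] at this
      omega
    obtain ⟨w₂, hw₂W, hw₂span⟩ := Set.not_subset.mp fun h => hspan_lt fun x hx => h hx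
    obtain ⟨u₁, hu₁⟩ := hw₁W
    -- get a ∈ A with a *ᵥ w₁ = u₂ where w₂ = E *ᵥ u₂
    obtain ⟨u₂, hu₂⟩ := hw₂W
    have hu₁' : E.mulVec u₁ = w₁ := hu₁
    have hu₂' : E.mulVec u₂ = w₂ := hu₂
    obtain ⟨a, haA, ha⟩ := burnside_cyclic S hirr hw₁0 u₂
    -- T : W →ₗ W, restriction of mulVecLin (E * a)
    have hmaps : ∀ x ∈ W, (E * a).mulVecLin x ∈ W := by
      intro x hx
      exact ⟨a.mulVec x, by simp [Matrix.mulVecLin_apply, Matrix.mulVec_mulVec]⟩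
    set T : W →ₗ[F] W := LinearMap.restrict (E * a).mulVecLin hmaps with hT
    haveI : Nontrivial W := Submodule.nontrivial_iff_ne_bot.mpr hWne
    obtain ⟨μ, hμ⟩ := Module.End.exists_eigenvalue T
    obtain ⟨w₀, hw₀⟩ := hμ.exists_hasEigenvector
    set N : Matrix (Fin n) (Fin n) F := E * a * E - μ • E with hN
    have hNA : N ∈ A := A.sub_mem (A.mul_mem (A.mul_mem hEA haA) hEA) (A.smul_mem hEA μ)
    have hNvec : ∀ v, N.mulVec v = (E * a).mulVec (E.mulVec v) - μ • E.mulVec v := by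
      intro v
      rw [hN, Matrix.sub_mulVec, Matrix.mulVec_mulVec, Matrix.smul_mulVec]
    have hN0 : N ≠ 0 := by
      intro h
      apply hw₂span
      have hv := hNvec u₁
      rw [h, Matrix.zero_mulVec] at hv
      rw [hu₁', ← Matrix.mulVec_mulVec, ha, hu₂'] at hv
      have : w₂ = μ • w₁ := by
        have := hv.symm
        rwa [sub_eq_zero] at this
      exact Submodule.mem_span_singleton.mpr ⟨μ, this.symm⟩
    -- rank N < rank E
    have hrankN : N.rank < E.rank := by
      set T' : W →ₗ[F] W := T - μ • LinearMap.id with hT'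
      have hT'ker : LinearMap.ker T' ≠ ⊥ := by
        rw [Submodule.ne_bot_iff]
        refine ⟨w₀, ?_, hw₀.2⟩
        rw [LinearMap.mem_ker, hT']
        simp only [LinearMap.sub_apply, LinearMap.smul_apply, LinearMap.id_apply]
        rw [sub_eq_zero]
        exact hw₀.apply_eq_smul
      have hle : LinearMap.range N.mulVecLin ≤ Submodule.map W.subtype (LinearMap.range T') := by
        rintro _ ⟨v, rfl⟩
        have hEvW : E.mulVec v ∈ W := ⟨v, rfl⟩
        refine ⟨T' ⟨E.mulVec v, hEvW⟩, ⟨⟨E.mulVec v, hEvW⟩, rfl⟩, ?_⟩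
        rw [hT']
        simp only [LinearMap.sub_apply, LinearMap.smul_apply, LinearMap.id_apply]
        have hTapp : (T ⟨E.mulVec v, hEvW⟩ : Fin n → F) = (E * a).mulVec (E.mulVec v) := by
          rw [hT]; rfl
        have : (W.subtype) (T ⟨E.mulVec v, hEvW⟩ - μ • ⟨E.mulVec v, hEvW⟩) =
            (E * a).mulVec (E.mulVec v) - μ • E.mulVec v := by
          simp [hTapp]
        rw [this, ← hNvec]
        simp [Matrix.mulVecLin_apply]
      calc N.rank ≤ finrank F (Submodule.map W.subtype (LinearMap.range T')) :=
              Submodule.finrank_mono hle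
        _ ≤ finrank F (LinearMap.range T') := Submodule.finrank_map_le _ _
        _ < finrank F W := by
              have hrn := LinearMap.finrank_range_add_finrank_ker T'
              have hker : finrank F (LinearMap.ker T') ≠ 0 := by
                intro h
                exact hT'ker (Submodule.finrank_eq_zero.mp h)
              omega
        _ = E.rank := hWrank
    have : sInf P ≤ N.rank := Nat.sInf_le ⟨N, hNA, hN0, rfl⟩
    omega
  have hrank1 : E.rank = 1 := by omega
  -- rank one decomposition : E = vecMulVec x y
  obtain ⟨x, y, hx0, hy0, hExy⟩ : ∃ (x y : Fin n → F), x ≠ 0 ∧ y ≠ 0 ∧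
      E = Matrix.vecMulVec x y := by
    have hWr : finrank F (LinearMap.range E.mulVecLin) = 1 := hrank1
    obtain ⟨w₀, hw₀0, hall⟩ := finrank_eq_one_iff'.mp hWr
    set x : Fin n → F := (w₀ : Fin n → F) with hxdef
    have hx0 : x ≠ 0 := fun h => hw₀0 (Subtype.ext h)
    have hcol : ∀ j : Fin n, ∃ c : F, c • x = E.mulVec (Pi.single j 1) := by
      intro j
      obtain ⟨c, hc⟩ := hall ⟨E.mulVec (Pi.single j 1), ⟨Pi.single j 1, rfl⟩⟩
      exact ⟨c, congrArg Subtype.val hc⟩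
    choose y hy using hcol
    have hExy : E = Matrix.vecMulVec x y := by
      ext i j
      have h1 := congrFun (hy j) i
      simp only [Pi.smul_apply, smul_eq_mul, Matrix.mulVec_single, MulOpposite.op_one, one_smul, Matrix.col_apply, mul_one] at h1
      rw [Matrix.vecMulVec_apply, ← h1, mul_comm]
    have hy0 : y ≠ 0 := by
      intro h
      apply hE0
      rw [hExy, h]
      ext i j
      simp [Matrix.vecMulVec_apply]
    exact ⟨x, y, hx0, hy0, hExy⟩
  -- every single is in A
  have hstd : ∀ i j : Fin n, Matrix.single i j (1:F) ∈ A := by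
    intro i j
    obtain ⟨a, haA, ha⟩ := burnside_cyclic S hirr hx0 (Pi.single i 1)
    obtain ⟨b, hbA, hb⟩ := burnside_cocyclic S hirr hy0 (Pi.single j 1)
    have : a * E * b = Matrix.single i j 1 := by
      rw [hExy, mul_vecMulVec_mul, ha, hb, ← Matrix.single_eq_single_vecMulVec_single]
    rw [← this]
    exact A.mul_mem (A.mul_mem haA hEA) hbA
  -- conclude
  rw [eq_top_iff]
  rintro M -
  rw [Matrix.matrix_eq_sum_single M]
  apply Subalgebra.sum_mem
  intro i _
  apply Subalgebra.sum_mem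
  intro j _
  have : Matrix.single i j (M i j) = (M i j) • Matrix.single i j 1 := by
    rw [Matrix.smul_single, smul_eq_mul, mul_one]
  rw [this]
  exact A.smul_mem (hstd i j) _
end
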